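/- Fix a real α > 1/2 and a real c with 0 < c ≤ 2^α − 1. The function g(φ) = (1 − φ^{−α})² + c·φ^{−2α} attains its minimum over [1, ∞) uniquely at φ* = (1 + c)^{1/α}, and 1 < φ* ≤ 2; moreover g is strictly decreasing on [1, φ*] and strictly increasing on [φ*, ∞). -/

import Mathlib

/-- Optimal step size for sign descent with α > 1/2:
`g(φ) = (1 − φ^{−α})² + c·φ^{−2α}` attains its minimum over `[1,∞)` uniquely at
`φ* = (1+c)^{1/α} ∈ (1,2]`, strictly decreasing before and strictly increasing
after. -/
theorem stmt16 (α c : ℝ) (hα : 1/2 < α) (hc0 : 0 < c) (hc1 : c ≤ 2 ^ α - 1) :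
    let g : ℝ → ℝ := fun φ => (1 - φ ^ (-α)) ^ 2 + c * φ ^ (-(2 * α))
    let φstar : ℝ := (1 + c) ^ (1/α)
    1 < φstar ∧ φstar ≤ 2 ∧
    (∀ φ ∈ Set.Ici (1 : ℝ), g φstar ≤ g φ) ∧
    (∀ φ ∈ Set.Ici (1 : ℝ), g φ = g φstar → φ = φstar) ∧
    StrictAntiOn g (Set.Icc 1 φstar) ∧
    StrictMonoOn g (Set.Ici φstar) := by
  intro g φstar
  have hα0 : (0:ℝ) < α := by linarith
  have h1c : (1:ℝ) < 1 + c := by linarith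
  have h1c0 : (0:ℝ) < 1 + c := by linarith
  -- rewrite g via u = φ^(-α)
  have key : ∀ φ : ℝ, 0 < φ →
      g φ = (1 + c) * (φ ^ (-α) - (1 + c)⁻¹) ^ 2 + c / (1 + c) := by
    intro φ hφ
    have h2 : φ ^ (-(2 * α)) = (φ ^ (-α)) ^ 2 := by
      rw [← Real.rpow_natCast (φ ^ (-α)) 2, ← Real.rpow_mul hφ.le]
      norm_num
      ring_nf
    simp only [g, h2]
    field_simp
    ring
  have hfs : φstar ^ (-α) = (1 + c)⁻¹ := by
    rw [show φstar = (1 + c) ^ (1/α) from rfl, ← Real.rpow_mul h1c0.le]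
    rw [show 1/α * (-α) = -1 by field_simp]
    exact Real.rpow_neg_one _
  have hφs1 : 1 < φstar :=
    Real.one_lt_rpow_iff_of_pos h1c0 |>.2 (Or.inl ⟨h1c, by positivity⟩)
  have hφs0 : 0 < φstar := by linarith
  -- f strictly antitone on (0,∞)
  have hanti : ∀ x y : ℝ, 0 < x → x < y → y ^ (-α) < x ^ (-α) := fun x y hx hxy =>
    Real.rpow_lt_rpow_of_neg hx hxy (by linarith)
  have hinj : ∀ x y : ℝ, 0 < x → 0 < y → x ^ (-α) = y ^ (-α) → x = y := by
    intro x y hx hy h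
    rcases lt_trichotomy x y with h' | h' | h'
    · exact absurd h (ne_of_gt (hanti x y hx h'))
    · exact h'
    · exact absurd h (ne_of_lt (hanti y x hy h'))
  refine ⟨hφs1, ?_, ?_, ?_, ?_, ?_⟩
  · -- φstar ≤ 2
    calc φstar ≤ (2 ^ α) ^ (1/α) :=
          Real.rpow_le_rpow h1c0.le (by linarith) (by positivity)
      _ = 2 := by
          rw [← Real.rpow_mul (by norm_num)]
          rw [show α * (1/α) = 1 by field_simp]
          exact Real.rpow_one 2
  · intro φ hφ
    have hφ0 : (0:ℝ) < φ := lt_of_lt_of_le one_pos hφ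
    rw [key φ hφ0, key φstar hφs0, hfs]
    nlinarith [sq_nonneg (φ ^ (-α) - (1 + c)⁻¹)]
  · intro φ hφ heq
    have hφ0 : (0:ℝ) < φ := lt_of_lt_of_le one_pos hφ
    rw [key φ hφ0, key φstar hφs0, hfs] at heq
    have : (φ ^ (-α) - (1 + c)⁻¹) ^ 2 = 0 := by nlinarith
    have h0 : φ ^ (-α) = φstar ^ (-α) := by
      rw [hfs]; nlinarith [sq_nonneg (φ ^ (-α) - (1 + c)⁻¹)]
    exact hinj φ φstar hφ0 hφs0 h0
  · -- strictly decreasing on [1, φstar]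
    intro x hx y hy hxy
    have hx0 : (0:ℝ) < x := lt_of_lt_of_le one_pos hx.1
    have hy0 : (0:ℝ) < y := lt_of_lt_of_le one_pos hy.1
    rw [key x hx0, key y hy0]
    have h1 : y ^ (-α) < x ^ (-α) := hanti x y hx0 hxy
    have h2 : (1 + c)⁻¹ ≤ y ^ (-α) := by
      rcases eq_or_lt_of_le hy.2 with h | h
      · rw [h, hfs]
      · rw [← hfs]; exact (hanti y φstar hy0 h).le
    nlinarith [mul_pos h1c0 (mul_pos (sub_pos.2 h1)
      (by linarith : (0:ℝ) < x ^ (-α) + y ^ (-α) - 2 * (1 + c)⁻¹))]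
  · intro x hx y hy hxy
    have hx0 : (0:ℝ) < x := lt_of_lt_of_le hφs0 hx
    have hy0 : (0:ℝ) < y := lt_of_lt_of_le hφs0 hy
    rw [key x hx0, key y hy0]
    have h1 : y ^ (-α) < x ^ (-α) := hanti x y hx0 hxy
    have h2 : x ^ (-α) ≤ (1 + c)⁻¹ := by
      rcases eq_or_lt_of_le (Set.mem_Ici.mp hx) with h | h
      · rw [← h, hfs]
      · rw [← hfs]; exact (hanti φstar x hφs0 h).le
    nlinarith [mul_pos h1c0 (mul_pos (sub_pos.2 h1)
      (by linarith : (0:ℝ) < 2 * (1 + c)⁻¹ - x ^ (-α) - y ^ (-α)))]
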